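/- Fix $n$ and $m$ with $2\le m\le n$, set $N = n-m+1$ and $M = \lfloor (m-1)^{3/4}\rfloor$. Let $Z$ be a simple symmetric random walk. Then $\sum_{z=M+1}^{m-1} \P_0(Z_{m-1}=z)\,\P_z(\min_{i\le N} Z_i>0) \le C\,\big(\tfrac{m}{\sqrt{N}}\wedge 1\big)\exp(-(m-1)^{1/2}/2)$ for a universal constant $C$, and this quantity is at most $C' (n-m+1)/n^{3/2}$ for a universal constant $C'$. -/

import Mathlib

open Finset
open scoped Classical

/-- The ±1 step determined by a Bool. -/
def step (b : Bool) : ℤ := if b then 1 else -1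

/-- Partial sum of the first `i` of `n` ±1 increments. -/
def pSum (n : ℕ) (ω : Fin n → Bool) (i : ℕ) : ℤ :=
  ∑ k ∈ Finset.univ.filter (fun k : Fin n => (k : ℕ) < i), step (ω k)

/-- `P_0(Z_{m-1} = z)` for a walk of `m-1` steps. -/
noncomputable def endAtProb (m z : ℕ) : ℝ :=
  ((Finset.univ.filter
      (fun ω : Fin (m - 1) → Bool => pSum (m - 1) ω (m - 1) = (z : ℤ))).card : ℝ) / 2 ^ (m - 1)

/-- `P_z(min_{i ≤ N} Z_i > 0)` for a walk of `N` steps started at `z`. -/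
noncomputable def stayPosProb (N z : ℕ) : ℝ :=
  ((Finset.univ.filter
      (fun ω : Fin N → Bool => ∀ i, 1 ≤ i → i ≤ N → 0 < (z : ℤ) + pSum N ω i)).card : ℝ) / 2 ^ N

lemma step_neg (b : Bool) : step (!b) = - step b := by cases b <;> simp [step]

lemma step_cases (b : Bool) : step b = 1 ∨ step b = -1 := by cases b <;> simp [step]

lemma pSum_zero (n : ℕ) (ω : Fin n → Bool) : pSum n ω 0 = 0 := by
  simp [pSum]

lemma pSum_succ (n : ℕ) (ω : Fin n → Bool) (i : ℕ) (h : i < n) :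
    pSum n ω (i + 1) = pSum n ω i + step (ω ⟨i, h⟩) := by
  rw [pSum, pSum]
  have : (Finset.univ.filter (fun k : Fin n => (k : ℕ) < i + 1)) =
      insert (⟨i, h⟩ : Fin n) (Finset.univ.filter (fun k : Fin n => (k : ℕ) < i)) := by
    ext k; simp [Finset.mem_filter, Fin.ext_iff]; omega
  rw [this, Finset.sum_insert (by simp)]
  ring

lemma pSum_congr {n : ℕ} {ω ω' : Fin n → Bool} {i : ℕ}
    (h : ∀ k : Fin n, (k : ℕ) < i → ω k = ω' k) : pSum n ω i = pSum n ω' i := by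
  apply Finset.sum_congr rfl
  intro k hk
  rw [h k (by simpa using hk)]

lemma pSum_split {n : ℕ} (ω : Fin n → Bool) {τ i : ℕ} (h : τ ≤ i) :
    pSum n ω i = pSum n ω τ +
      ∑ k ∈ Finset.univ.filter (fun k : Fin n => τ ≤ (k : ℕ) ∧ (k : ℕ) < i), step (ω k) := by
  rw [pSum, pSum, ← Finset.sum_union]
  · apply Finset.sum_congr _ (fun _ _ => rfl)
    ext k; simp [Finset.mem_filter]; omega
  · rw [Finset.disjoint_left]
    intro k hk hk'
    simp only [Finset.mem_filter] at hk hk'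
    omega

lemma pSum_neg (n : ℕ) (ω : Fin n → Bool) (i : ℕ) :
    pSum n (fun k => !(ω k)) i = - pSum n ω i := by
  rw [pSum, pSum, ← Finset.sum_neg_distrib]
  exact Finset.sum_congr rfl fun k _ => step_neg (ω k)

def flipAfter (n τ : ℕ) (ω : Fin n → Bool) : Fin n → Bool :=
  fun k => if (k : ℕ) < τ then ω k else !(ω k)

lemma pSum_flipAfter_le {n τ i : ℕ} (ω : Fin n → Bool) (h : i ≤ τ) :
    pSum n (flipAfter n τ ω) i = pSum n ω i := by
  apply pSum_congr
  intro k hk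
  simp [flipAfter, lt_of_lt_of_le hk h]

lemma pSum_flipAfter_ge {n τ i : ℕ} (ω : Fin n → Bool) (h : τ ≤ i) :
    pSum n (flipAfter n τ ω) i = 2 * pSum n ω τ - pSum n ω i := by
  have h1 := pSum_split (flipAfter n τ ω) (n := n) h
  have h2 := pSum_split ω (n := n) h
  rw [h1, pSum_flipAfter_le ω le_rfl]
  have : ∑ k ∈ Finset.univ.filter (fun k : Fin n => τ ≤ (k : ℕ) ∧ (k : ℕ) < i),
      step (flipAfter n τ ω k) =
      - ∑ k ∈ Finset.univ.filter (fun k : Fin n => τ ≤ (k : ℕ) ∧ (k : ℕ) < i), step (ω k) := by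
    rw [← Finset.sum_neg_distrib]
    apply Finset.sum_congr rfl
    intro k hk
    simp only [Finset.mem_filter] at hk
    rw [flipAfter, if_neg (by omega), step_neg]
  rw [this]
  omega

/-- The first time `i ≤ n` at which the walk is `≤ z`. -/
noncomputable def hitTime (n : ℕ) (z : ℤ) (ω : Fin n → Bool) : ℕ :=
  sInf {i | i ≤ n ∧ pSum n ω i ≤ z}

lemma first_hit {n : ℕ} (ω : Fin n → Bool) {z : ℤ} (hz : z < 0)
    (h : ∃ i, i ≤ n ∧ pSum n ω i ≤ z) :
    hitTime n z ω ≤ n ∧ pSum n ω (hitTime n z ω) = z ∧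
      ∀ i < hitTime n z ω, z < pSum n ω i := by
  have hne : {i | i ≤ n ∧ pSum n ω i ≤ z}.Nonempty := h
  have hmem := Nat.sInf_mem hne
  set τ := hitTime n z ω with hτdef
  have hτ : τ ≤ n ∧ pSum n ω τ ≤ z := hmem
  have hmin : ∀ i < τ, z < pSum n ω i := by
    intro i hi
    have hni := Nat.notMem_of_lt_sInf hi
    simp only [Set.mem_setOf_eq, not_and, not_le] at hni
    exact hni (le_trans (le_of_lt hi) hτ.1)
  refine ⟨hτ.1, ?_, hmin⟩
  have hτpos : 0 < τ := by
    rcases Nat.eq_zero_or_pos τ with h0 | h0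
    · exfalso
      have := hτ.2
      rw [h0, pSum_zero] at this
      omega
    · exact h0
  obtain ⟨j, hj⟩ : ∃ j, τ = j + 1 := ⟨τ - 1, by omega⟩
  have hjn : j < n := by omega
  have hstep := pSum_succ n ω j hjn
  have hprev : z < pSum n ω j := hmin j (by omega)
  rcases step_cases (ω ⟨j, hjn⟩) with hs | hs <;>
    · rw [hj] at hτ ⊢
      rw [hstep, hs] at hτ ⊢
      omega

/-- Reflection injection: paths ending strictly below `z < 0` inject into paths ending
strictly above `z` that hit level `≤ z` at some time. -/
lemma card_end_lt_le {n : ℕ} {z : ℤ} (hz : z < 0) :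
    (Finset.univ.filter (fun ω : Fin n → Bool => pSum n ω n < z)).card ≤
    (Finset.univ.filter (fun ω : Fin n → Bool =>
        z < pSum n ω n ∧ ∃ i, i ≤ n ∧ pSum n ω i ≤ z)).card := by
  classical
  set f : (Fin n → Bool) → (Fin n → Bool) := fun ω => flipAfter n (hitTime n z ω) ω with hf
  have key : ∀ ω : Fin n → Bool, pSum n ω n < z → hitTime n z (f ω) = hitTime n z ω := by
    intro ω hω
    have hex : ∃ i, i ≤ n ∧ pSum n ω i ≤ z := ⟨n, le_rfl, le_of_lt hω⟩
    obtain ⟨hτn, hτz, hτmin⟩ := first_hit ω hz hex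
    apply le_antisymm
    · apply Nat.sInf_le
      refine ⟨hτn, ?_⟩
      rw [hf]
      rw [pSum_flipAfter_le ω le_rfl, hτz]
    · by_contra hlt
      push_neg at hlt
      have hne : {i | i ≤ n ∧ pSum n (f ω) i ≤ z}.Nonempty := by
        refine ⟨hitTime n z ω, hτn, ?_⟩
        rw [hf, pSum_flipAfter_le ω le_rfl, hτz]
      have hmem := Nat.sInf_mem hne
      have h1 : pSum n (f ω) (hitTime n z (f ω)) ≤ z := hmem.2
      rw [hf, pSum_flipAfter_le ω (le_of_lt hlt)] at h1
      exact absurd h1 (not_le.2 (hτmin _ hlt))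
  apply Finset.card_le_card_of_injOn f
  · intro ω hω
    simp only [Finset.mem_coe, Finset.mem_filter, Finset.mem_univ, true_and] at hω ⊢
    have hex : ∃ i, i ≤ n ∧ pSum n ω i ≤ z := ⟨n, le_rfl, le_of_lt hω⟩
    obtain ⟨hτn, hτz, hτmin⟩ := first_hit ω hz hex
    constructor
    · rw [hf]
      rw [pSum_flipAfter_ge ω hτn, hτz]
      omega
    · exact ⟨hitTime n z ω, hτn, by rw [hf, pSum_flipAfter_le ω le_rfl, hτz]⟩
  · intro ω₁ h₁ ω₂ h₂ heq
    simp only [Finset.coe_filter, Set.mem_setOf_eq, Finset.mem_univ, true_and] at h₁ h₂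
    have hττ : hitTime n z ω₁ = hitTime n z ω₂ := by
      rw [← key ω₁ h₁, ← key ω₂ h₂, heq]
    set τ := hitTime n z ω₁ with hτ
    funext k
    have hk : f ω₁ k = f ω₂ k := congrFun heq k
    rw [hf] at hk
    simp only [flipAfter, ← hττ, ← hτ] at hk
    by_cases hkτ : (k : ℕ) < τ
    · simpa [hkτ] using hk
    · simp only [if_neg hkτ] at hk
      exact Bool.not_inj hk

lemma pSum_eq_count (n : ℕ) (ω : Fin n → Bool) :
    pSum n ω n = 2 * ((Finset.univ.filter (fun k : Fin n => ω k = true)).card : ℤ) - n := by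
  have huniv : (Finset.univ.filter (fun k : Fin n => (k : ℕ) < n)) = Finset.univ := by
    ext k; simp [k.isLt]
  rw [pSum, huniv]
  rw [← Finset.sum_filter_add_sum_filter_not Finset.univ (fun k => ω k = true)]
  have h1 : ∑ k ∈ Finset.univ.filter (fun k : Fin n => ω k = true), step (ω k) =
      ((Finset.univ.filter (fun k : Fin n => ω k = true)).card : ℤ) := by
    rw [Finset.sum_congr rfl (fun k hk => ?_), Finset.sum_const, nsmul_eq_mul, mul_one]
    simp only [Finset.mem_filter] at hk
    simp [step, hk.2]
  have h2 : ∑ k ∈ Finset.univ.filter (fun k : Fin n => ¬ ω k = true), step (ω k) =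
      -((Finset.univ.filter (fun k : Fin n => ¬ ω k = true)).card : ℤ) := by
    rw [Finset.sum_congr rfl (fun k hk => ?_), Finset.sum_const, nsmul_eq_mul, mul_neg_one]
    simp only [Finset.mem_filter] at hk
    simp [step, hk.2]
  rw [h1, h2]
  have := Finset.card_filter_add_card_filter_not (s := (Finset.univ : Finset (Fin n)))
    (p := fun k => ω k = true)
  rw [Finset.card_univ, Fintype.card_fin] at this
  omega

lemma card_count_eq (n j : ℕ) :
    (Finset.univ.filter (fun ω : Fin n → Bool =>
      (Finset.univ.filter (fun k : Fin n => ω k = true)).card = j)).card = n.choose j := by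
  classical
  have heq : (Finset.univ.filter (fun ω : Fin n → Bool =>
      (Finset.univ.filter (fun k : Fin n => ω k = true)).card = j)).card =
      (Finset.powersetCard j (Finset.univ : Finset (Fin n))).card := by
    refine Finset.card_bij' (fun ω _ => Finset.univ.filter (fun k => ω k = true))
      (fun s _ => fun k => decide (k ∈ s)) ?_ ?_ ?_ ?_
    · intro ω hω
      simp only [Finset.mem_filter, Finset.mem_univ, true_and] at hω
      exact Finset.mem_powersetCard.2 ⟨Finset.subset_univ _, hω⟩
    · intro s hs
      rw [Finset.mem_powersetCard] at hs
      simp only [Finset.mem_filter, Finset.mem_univ, true_and]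
      rw [← hs.2]
      congr 1
      ext k; simp
    · intro ω hω
      funext k
      simp
    · intro s hs
      ext k; simp
  rw [heq, Finset.card_powersetCard, Finset.card_univ, Fintype.card_fin]

lemma card_end_eq_le (n : ℕ) (y : ℤ) :
    (Finset.univ.filter (fun ω : Fin n → Bool => pSum n ω n = y)).card ≤ n.choose (n / 2) := by
  classical
  by_cases hpar : ∃ j : ℕ, (y + n) = 2 * j
  · obtain ⟨j, hj⟩ := hpar
    have : (Finset.univ.filter (fun ω : Fin n → Bool => pSum n ω n = y)) ⊆
        (Finset.univ.filter (fun ω : Fin n → Bool =>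
          (Finset.univ.filter (fun k : Fin n => ω k = true)).card = j)) := by
      intro ω hω
      simp only [Finset.mem_filter, Finset.mem_univ, true_and] at hω ⊢
      have := pSum_eq_count n ω
      omega
    calc _ ≤ _ := Finset.card_le_card this
    _ = n.choose j := card_count_eq n j
    _ ≤ n.choose (n / 2) := Nat.choose_le_middle j n
  · convert Nat.zero_le _
    rw [Finset.card_eq_zero, Finset.filter_eq_empty_iff]
    intro ω _
    intro hω
    have := pSum_eq_count n ω
    exact hpar ⟨(Finset.univ.filter (fun k : Fin n => ω k = true)).card, by omega⟩

/-- `centralBinom` squared bound: `(centralBinom n)^2 * (2n+1) ≤ 16^n`. -/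
lemma centralBinom_sq_le (n : ℕ) : (Nat.centralBinom n) ^ 2 * (2 * n + 1) ≤ 16 ^ n := by
  induction n with
  | zero => simp [Nat.centralBinom]
  | succ n ih =>
    have hrec := Nat.succ_mul_centralBinom_succ n
    have h1 : ((n + 1) * Nat.centralBinom (n + 1)) ^ 2 * (2 * (n + 1) + 1) =
        4 * (2 * n + 1) ^ 2 * (2 * n + 3) * (Nat.centralBinom n) ^ 2 := by
      rw [hrec]; ring
    have h2 : 4 * (2 * n + 1) * (2 * n + 3) ≤ 4 * (n + 1) ^ 2 * 4 := by nlinarith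
    have h3 : ((n + 1) * Nat.centralBinom (n + 1)) ^ 2 * (2 * (n + 1) + 1) ≤
        (n + 1) ^ 2 * 16 ^ (n + 1) := by
      rw [h1]
      calc 4 * (2 * n + 1) ^ 2 * (2 * n + 3) * (Nat.centralBinom n) ^ 2
          = (4 * (2 * n + 1) * (2 * n + 3)) * ((Nat.centralBinom n) ^ 2 * (2 * n + 1)) := by ring
        _ ≤ (4 * (n + 1) ^ 2 * 4) * 16 ^ n := Nat.mul_le_mul h2 ih
        _ = (n + 1) ^ 2 * 16 ^ (n + 1) := by ring
    have h4 : (n + 1) ^ 2 * ((Nat.centralBinom (n + 1)) ^ 2 * (2 * (n + 1) + 1)) ≤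
        (n + 1) ^ 2 * 16 ^ (n + 1) := by
      calc (n + 1) ^ 2 * ((Nat.centralBinom (n + 1)) ^ 2 * (2 * (n + 1) + 1))
          = ((n + 1) * Nat.centralBinom (n + 1)) ^ 2 * (2 * (n + 1) + 1) := by ring
        _ ≤ _ := h3
    exact Nat.le_of_mul_le_mul_left h4 (by positivity)

lemma centralBinom_real_le (j : ℕ) :
    (Nat.centralBinom j : ℝ) ≤ 4 ^ j / Real.sqrt (2 * j + 1) := by
  have hsq : ((Nat.centralBinom j : ℝ)) ^ 2 * (2 * j + 1) ≤ 16 ^ j := by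
    have := centralBinom_sq_le j
    have h2 := Nat.cast_le (α := ℝ).2 this
    push_cast at h2
    convert h2 using 2 <;> norm_num
  have hpos : (0:ℝ) < Real.sqrt (2 * j + 1) := Real.sqrt_pos.2 (by positivity)
  rw [le_div_iff₀ hpos]
  have h1 : (Nat.centralBinom j : ℝ) * Real.sqrt (2 * j + 1) =
      Real.sqrt ((Nat.centralBinom j : ℝ) ^ 2 * (2 * j + 1)) := by
    rw [Real.sqrt_mul (by positivity), Real.sqrt_sq (by positivity)]
  rw [h1]
  calc Real.sqrt ((Nat.centralBinom j : ℝ) ^ 2 * (2 * j + 1)) ≤ Real.sqrt (16 ^ j) :=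
        Real.sqrt_le_sqrt hsq
    _ = 4 ^ j := by
        rw [show (16:ℝ) ^ j = ((4:ℝ) ^ j) ^ 2 by
            rw [← pow_mul, mul_comm j 2, pow_mul]; norm_num,
          Real.sqrt_sq (by positivity)]

lemma choose_half_le (n : ℕ) (hn : 1 ≤ n) :
    (n.choose (n / 2) : ℝ) ≤ 2 ^ n / Real.sqrt n := by
  have hn0 : (0:ℝ) < Real.sqrt n := Real.sqrt_pos.2 (by exact_mod_cast hn)
  rcases Nat.even_or_odd n with ⟨k, hk⟩ | ⟨k, hk⟩
  · -- n = 2k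
    have hk1 : 1 ≤ k := by omega
    have hhalf : n / 2 = k := by omega
    have hch : n.choose (n / 2) = Nat.centralBinom k := by
      rw [hhalf, Nat.centralBinom_eq_two_mul_choose, show 2 * k = n by omega]
    rw [hch]
    calc (Nat.centralBinom k : ℝ) ≤ 4 ^ k / Real.sqrt (2 * k + 1) := centralBinom_real_le k
      _ ≤ 4 ^ k / Real.sqrt n := by
          apply div_le_div_of_nonneg_left (by positivity) hn0
          apply Real.sqrt_le_sqrt
          exact_mod_cast Nat.cast_le.mpr (by omega : n ≤ 2 * k + 1)
      _ = 2 ^ n / Real.sqrt n := by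
          rw [show (4:ℝ) ^ k = 2 ^ n by rw [show (4:ℝ) = 2^2 by norm_num, ← pow_mul]; congr 1; omega]
  · -- n = 2k+1
    have hhalf : n / 2 = k := by omega
    have hch : 2 * n.choose (n / 2) = Nat.centralBinom (k + 1) := by
      rw [hhalf, Nat.centralBinom_eq_two_mul_choose]
      have h1 : 2 * (k + 1) = (2 * k + 1) + 1 := by ring
      rw [h1, Nat.choose_succ_succ (2 * k + 1) k]
      have h2 : (2 * k + 1).choose (k + 1) = (2 * k + 1).choose k := by
        rw [← Nat.choose_symm (by omega : k + 1 ≤ 2 * k + 1)]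
        congr 1; omega
      rw [h2, show n = 2 * k + 1 from hk]
      ring
    have hc : (2:ℝ) * (n.choose (n / 2) : ℝ) = (Nat.centralBinom (k + 1) : ℝ) := by
      exact_mod_cast hch
    have hcc : (n.choose (n / 2) : ℝ) = (Nat.centralBinom (k + 1) : ℝ) / 2 := by linarith
    rw [hcc]
    calc (Nat.centralBinom (k + 1) : ℝ) / 2 ≤ (4 ^ (k+1) / Real.sqrt (2 * ((k+1 : ℕ) : ℝ) + 1)) / 2 := by
          apply div_le_div_of_nonneg_right (centralBinom_real_le (k+1)) (by norm_num)
      _ ≤ (4 ^ (k+1) / Real.sqrt n) / 2 := by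
          apply div_le_div_of_nonneg_right _ (by norm_num)
          apply div_le_div_of_nonneg_left (by positivity) hn0
          apply Real.sqrt_le_sqrt
          exact_mod_cast Nat.cast_le.mpr (by omega : n ≤ 2 * (k + 1) + 1)
      _ = 2 ^ n / Real.sqrt n := by
          rw [show (4:ℝ) ^ (k+1) = 2 ^ (n+1) by
            rw [show (4:ℝ) = 2^2 by norm_num, ← pow_mul]; congr 1; omega]
          rw [pow_succ]
          ring

lemma sum_exp_pSum (n : ℕ) (t : ℝ) :
    ∑ ω : Fin n → Bool, Real.exp (t * ((pSum n ω n : ℤ) : ℝ)) =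
      (Real.exp t + Real.exp (-t)) ^ n := by
  have hps : ∀ ω : Fin n → Bool, pSum n ω n = ∑ k : Fin n, step (ω k) := by
    intro ω
    rw [pSum]
    apply Finset.sum_congr _ (fun _ _ => rfl)
    ext k; simp [k.isLt]
  have h1 : ∀ ω : Fin n → Bool, Real.exp (t * ((pSum n ω n : ℤ) : ℝ)) =
      ∏ k : Fin n, Real.exp (t * ((step (ω k) : ℤ) : ℝ)) := by
    intro ω
    rw [hps ω, ← Real.exp_sum]
    congr 1
    push_cast
    rw [Finset.mul_sum]
  simp_rw [h1]
  have hps2 := Finset.prod_univ_sum (fun _ : Fin n => (Finset.univ : Finset Bool))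
    (fun _ b => Real.exp (t * ((step b : ℤ) : ℝ)))
  rw [Fintype.piFinset_univ] at hps2
  rw [← hps2]
  rw [show (Real.exp t + Real.exp (-t)) ^ n =
      ∏ _k : Fin n, (Real.exp t + Real.exp (-t)) by simp]
  apply Finset.prod_congr rfl
  intro k _
  rw [Fintype.sum_bool]
  simp [step]

lemma chernoff (n : ℕ) (hn : 1 ≤ n) (a : ℝ) (ha : 0 < a) :
    ((Finset.univ.filter (fun ω : Fin n → Bool => a ≤ ((pSum n ω n : ℤ) : ℝ))).card : ℝ) ≤
      2 ^ n * Real.exp (-(a ^ 2) / (2 * n)) := by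
  set t := a / n with htdef
  have hnpos : (0:ℝ) < n := by exact_mod_cast hn
  have ht : 0 < t := div_pos ha hnpos
  have key : ((Finset.univ.filter
      (fun ω : Fin n → Bool => a ≤ ((pSum n ω n : ℤ) : ℝ))).card : ℝ) * Real.exp (t * a) ≤
      (Real.exp t + Real.exp (-t)) ^ n := by
    rw [← sum_exp_pSum n t]
    calc ((Finset.univ.filter
        (fun ω : Fin n → Bool => a ≤ ((pSum n ω n : ℤ) : ℝ))).card : ℝ) * Real.exp (t * a) =
        ∑ _ω ∈ Finset.univ.filter (fun ω : Fin n → Bool => a ≤ ((pSum n ω n : ℤ) : ℝ)),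
          Real.exp (t * a) := by rw [Finset.sum_const, nsmul_eq_mul]
      _ ≤ ∑ ω ∈ Finset.univ.filter (fun ω : Fin n → Bool => a ≤ ((pSum n ω n : ℤ) : ℝ)),
          Real.exp (t * ((pSum n ω n : ℤ) : ℝ)) := by
          apply Finset.sum_le_sum
          intro ω hω
          simp only [Finset.mem_filter] at hω
          exact Real.exp_le_exp.2 (mul_le_mul_of_nonneg_left hω.2 (le_of_lt ht))
      _ ≤ ∑ ω : Fin n → Bool, Real.exp (t * ((pSum n ω n : ℤ) : ℝ)) := by
          apply Finset.sum_le_sum_of_subset_of_nonneg (Finset.filter_subset _ _)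
          intro ω _ _
          positivity
  have hcosh : (Real.exp t + Real.exp (-t)) ^ n ≤ 2 ^ n * Real.exp (n * t ^ 2 / 2) := by
    have h1 : Real.exp t + Real.exp (-t) = 2 * Real.cosh t := by
      rw [Real.cosh_eq]; ring
    rw [h1, mul_pow]
    apply mul_le_mul_of_nonneg_left _ (by positivity)
    calc Real.cosh t ^ n ≤ (Real.exp (t ^ 2 / 2)) ^ n :=
          pow_le_pow_left₀ (Real.cosh_pos t).le (Real.cosh_le_exp_half_sq t) n
      _ = Real.exp (n * (t ^ 2 / 2)) := by rw [← Real.exp_nat_mul]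
      _ = Real.exp (n * t ^ 2 / 2) := by ring_nf
  have hexp : Real.exp (n * t ^ 2 / 2) / Real.exp (t * a) = Real.exp (-(a ^ 2) / (2 * n)) := by
    rw [← Real.exp_sub]
    congr 1
    rw [htdef]
    field_simp
    ring
  have hepos : (0:ℝ) < Real.exp (t * a) := Real.exp_pos _
  calc ((Finset.univ.filter (fun ω : Fin n → Bool => a ≤ ((pSum n ω n : ℤ) : ℝ))).card : ℝ) =
      ((Finset.univ.filter
        (fun ω : Fin n → Bool => a ≤ ((pSum n ω n : ℤ) : ℝ))).card : ℝ) * Real.exp (t * a) /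
        Real.exp (t * a) := by field_simp
    _ ≤ (Real.exp t + Real.exp (-t)) ^ n / Real.exp (t * a) := by
        apply div_le_div_of_nonneg_right key hepos.le
    _ ≤ 2 ^ n * Real.exp (n * t ^ 2 / 2) / Real.exp (t * a) := by
        apply div_le_div_of_nonneg_right hcosh hepos.le
    _ = 2 ^ n * Real.exp (-(a ^ 2) / (2 * n)) := by
        rw [mul_div_assoc, hexp]

lemma stayPosProb_nonneg (N z : ℕ) : 0 ≤ stayPosProb N z := by
  rw [stayPosProb]; positivity

lemma stayPosProb_le_one (N z : ℕ) : stayPosProb N z ≤ 1 := by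
  rw [stayPosProb, div_le_one (by positivity)]
  calc ((Finset.univ.filter
      (fun ω : Fin N → Bool => ∀ i, 1 ≤ i → i ≤ N → 0 < (z : ℤ) + pSum N ω i)).card : ℝ) ≤
      ((Finset.univ : Finset (Fin N → Bool)).card : ℝ) := by
        exact_mod_cast Nat.cast_le.mpr (Finset.card_le_card (Finset.filter_subset _ _))
    _ = 2 ^ N := by
        rw [Finset.card_univ]
        simp [Fintype.card_fun]

lemma stay_card_le (N z : ℕ) (hN : 1 ≤ N) (hz : 1 ≤ z) :
    (Finset.univ.filter
      (fun ω : Fin N → Bool => ∀ i, 1 ≤ i → i ≤ N → 0 < (z : ℤ) + pSum N ω i)).card ≤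
      2 * z * N.choose (N / 2) := by
  suffices h : ∀ S : Finset (Fin N → Bool),
      (∀ ω, ω ∈ S ↔ ∀ i, 1 ≤ i → i ≤ N → 0 < (z : ℤ) + pSum N ω i) →
      S.card ≤ 2 * z * N.choose (N / 2) by
    apply h
    intro ω
    simp [Finset.mem_filter]
  intro S hSmem
  classical
  set zz : ℤ := -(z : ℤ) with hzz
  have hzzneg : zz < 0 := by simp [hzz]; exact_mod_cast hz
  set E := Finset.univ.filter (fun ω : Fin N → Bool => zz < pSum N ω N) with hE
  set G := Finset.univ.filter (fun ω : Fin N → Bool =>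
    zz < pSum N ω N ∧ ∃ i, i ≤ N ∧ pSum N ω i ≤ zz) with hG
  set A := Finset.univ.filter (fun ω : Fin N → Bool => pSum N ω N < zz) with hA
  set Z' := Finset.univ.filter (fun ω : Fin N → Bool => (z : ℤ) < pSum N ω N) with hZ'
  -- S members avoid level zz entirely
  have hSavoid : ∀ ω ∈ S, ∀ i ≤ N, zz < pSum N ω i := by
    intro ω hω i hi
    rw [hSmem] at hω
    rcases Nat.eq_zero_or_pos i with h0 | h0
    · rw [h0, pSum_zero]; omega
    · have := hω i h0 hi
      omega
  have hSE : S ⊆ E := by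
    intro ω hω
    rw [hE, Finset.mem_filter]
    exact ⟨Finset.mem_univ _, hSavoid ω hω N le_rfl⟩
  have hSG : Disjoint S G := by
    rw [Finset.disjoint_left]
    intro ω hω hωG
    rw [hG, Finset.mem_filter] at hωG
    obtain ⟨i, hi, hilow⟩ := hωG.2.2
    exact absurd hilow (not_le.2 (hSavoid ω hω i hi))
  have hGE : G ⊆ E := by
    intro ω hω
    rw [hG, Finset.mem_filter] at hω
    rw [hE, Finset.mem_filter]
    exact ⟨Finset.mem_univ _, hω.2.1⟩
  have hcard1 : S.card + G.card ≤ E.card := by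
    rw [← Finset.card_union_of_disjoint hSG]
    exact Finset.card_le_card (Finset.union_subset hSE hGE)
  have hAG : A.card ≤ G.card := card_end_lt_le hzzneg
  have hAZ : A.card = Z'.card := by
    refine Finset.card_bij' (fun ω _ => fun k => !(ω k)) (fun ω _ => fun k => !(ω k)) ?_ ?_ ?_ ?_
    · intro ω hω
      rw [hA, Finset.mem_filter] at hω
      rw [hZ', Finset.mem_filter]
      refine ⟨Finset.mem_univ _, ?_⟩
      rw [pSum_neg]
      omega
    · intro ω hω
      rw [hZ', Finset.mem_filter] at hω
      rw [hA, Finset.mem_filter]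
      refine ⟨Finset.mem_univ _, ?_⟩
      rw [pSum_neg]
      omega
    · intro ω _; funext k; simp
    · intro ω _; funext k; simp
  have hZE : Z' ⊆ E := by
    intro ω hω
    rw [hZ', Finset.mem_filter] at hω
    rw [hE, Finset.mem_filter]
    refine ⟨Finset.mem_univ _, ?_⟩
    have : zz < (z:ℤ) := by omega
    omega
  have hScard : S.card + Z'.card ≤ E.card := by
    calc S.card + Z'.card = S.card + A.card := by rw [hAZ]
      _ ≤ S.card + G.card := by omega
      _ ≤ E.card := hcard1
  have hmid : E.card - Z'.card ≤ (Finset.Ioc zz (z:ℤ)).card * N.choose (N / 2) := by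
    have hsub : E \ Z' ⊆ (Finset.Ioc zz (z:ℤ)).biUnion
        (fun y => Finset.univ.filter (fun ω : Fin N → Bool => pSum N ω N = y)) := by
      intro ω hω
      rw [Finset.mem_sdiff, hE, hZ', Finset.mem_filter, Finset.mem_filter] at hω
      rw [Finset.mem_biUnion]
      refine ⟨pSum N ω N, ?_, by simp⟩
      rw [Finset.mem_Ioc]
      constructor
      · exact hω.1.2
      · by_contra hc
        push_neg at hc
        exact hω.2 ⟨Finset.mem_univ _, hc⟩
    calc E.card - Z'.card = (E \ Z').card := (Finset.card_sdiff_of_subset hZE).symm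
      _ ≤ ((Finset.Ioc zz (z:ℤ)).biUnion
          (fun y => Finset.univ.filter (fun ω : Fin N → Bool => pSum N ω N = y))).card :=
          Finset.card_le_card hsub
      _ ≤ ∑ y ∈ Finset.Ioc zz (z:ℤ),
          (Finset.univ.filter (fun ω : Fin N → Bool => pSum N ω N = y)).card :=
          Finset.card_biUnion_le
      _ ≤ ∑ _y ∈ Finset.Ioc zz (z:ℤ), N.choose (N / 2) :=
          Finset.sum_le_sum (fun y _ => card_end_eq_le N y)
      _ = (Finset.Ioc zz (z:ℤ)).card * N.choose (N / 2) := by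
          rw [Finset.sum_const, smul_eq_mul]
  have hIoc : (Finset.Ioc zz (z:ℤ)).card = 2 * z := by
    rw [Int.card_Ioc]
    simp [hzz]
    omega
  have : S.card ≤ E.card - Z'.card := by omega
  calc S.card ≤ E.card - Z'.card := this
    _ ≤ (Finset.Ioc zz (z:ℤ)).card * N.choose (N / 2) := hmid
    _ = 2 * z * N.choose (N / 2) := by rw [hIoc]

lemma stayPosProb_le (N z : ℕ) (hN : 1 ≤ N) (hz : 1 ≤ z) :
    stayPosProb N z ≤ 2 * z / Real.sqrt N := by
  rw [stayPosProb]
  have h2N : (0:ℝ) < 2 ^ N := by positivity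
  rw [div_le_div_iff₀ h2N (Real.sqrt_pos.2 (by exact_mod_cast hN))]
  calc ((Finset.univ.filter
      (fun ω : Fin N → Bool => ∀ i, 1 ≤ i → i ≤ N → 0 < (z : ℤ) + pSum N ω i)).card : ℝ) *
        Real.sqrt N ≤ (2 * z * N.choose (N / 2) : ℝ) * Real.sqrt N := by
        apply mul_le_mul_of_nonneg_right _ (Real.sqrt_nonneg _)
        exact_mod_cast Nat.cast_le.mpr (stay_card_le N z hN hz)
    _ ≤ (2 * z : ℝ) * (2 ^ N / Real.sqrt N) * Real.sqrt N := by
        apply mul_le_mul_of_nonneg_right _ (Real.sqrt_nonneg _)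
        have := choose_half_le N hN
        have hz2 : (0:ℝ) ≤ 2 * z := by positivity
        calc (2 * z * N.choose (N / 2) : ℝ) = (2 * z : ℝ) * (N.choose (N / 2) : ℝ) := by
              push_cast; ring
          _ ≤ (2 * z : ℝ) * (2 ^ N / Real.sqrt N) := mul_le_mul_of_nonneg_left this hz2
    _ = 2 * z * 2 ^ N := by
        have hs : Real.sqrt N ≠ 0 := ne_of_gt (Real.sqrt_pos.2 (by exact_mod_cast hN))
        field_simp

lemma endAtProb_nonneg (m z : ℕ) : 0 ≤ endAtProb m z := by
  rw [endAtProb]; positivity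

lemma sum_endAtProb_le (m : ℕ) (hm : 2 ≤ m) :
    ∑ z ∈ Finset.Icc (⌊((m : ℝ) - 1) ^ ((3 : ℝ) / 4)⌋₊ + 1) (m - 1), endAtProb m z ≤
      Real.exp (-Real.sqrt ((m : ℝ) - 1) / 2) := by
  classical
  set x : ℝ := (m : ℝ) - 1 with hxdef
  have hx1 : (1:ℝ) ≤ x := by
    rw [hxdef]
    have : (2:ℝ) ≤ m := by exact_mod_cast hm
    linarith
  have hx0 : (0:ℝ) < x := by linarith
  set a : ℝ := x ^ ((3:ℝ)/4) with hadef
  have ha1 : (1:ℝ) ≤ a := Real.one_le_rpow hx1 (by norm_num)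
  have ha0 : (0:ℝ) < a := by linarith
  set M : ℕ := ⌊a⌋₊ with hMdef
  have haM : a < (M : ℝ) + 1 := Nat.lt_floor_add_one a
  set n' : ℕ := m - 1 with hn'def
  have hn'1 : 1 ≤ n' := by omega
  have hn'x : (n' : ℝ) = x := by
    rw [hn'def, hxdef]
    push_cast [Nat.cast_sub (by omega : 1 ≤ m)]
    ring
  -- sum of cardinalities is at most the Chernoff set cardinality
  have hsub : ∀ z ∈ Finset.Icc (M + 1) n',
      (Finset.univ.filter (fun ω : Fin n' → Bool => pSum n' ω n' = (z : ℤ))) ⊆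
      (Finset.univ.filter (fun ω : Fin n' → Bool => a ≤ ((pSum n' ω n' : ℤ) : ℝ))) := by
    intro z hz ω hω
    rw [Finset.mem_filter] at hω ⊢
    refine ⟨Finset.mem_univ _, ?_⟩
    rw [hω.2]
    rw [Finset.mem_Icc] at hz
    push_cast
    have : ((M:ℝ) + 1) ≤ z := by exact_mod_cast hz.1
    linarith
  have hdisj : ∀ z₁ ∈ Finset.Icc (M + 1) n', ∀ z₂ ∈ Finset.Icc (M + 1) n', z₁ ≠ z₂ →
      Disjoint (Finset.univ.filter (fun ω : Fin n' → Bool => pSum n' ω n' = (z₁ : ℤ)))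
        (Finset.univ.filter (fun ω : Fin n' → Bool => pSum n' ω n' = (z₂ : ℤ))) := by
    intro z₁ _ z₂ _ hne
    rw [Finset.disjoint_left]
    intro ω h1 h2
    rw [Finset.mem_filter] at h1 h2
    exact hne (by exact_mod_cast h1.2.symm.trans h2.2)
  have hcards : ∑ z ∈ Finset.Icc (M + 1) n',
      ((Finset.univ.filter (fun ω : Fin n' → Bool => pSum n' ω n' = (z : ℤ))).card) ≤
      (Finset.univ.filter (fun ω : Fin n' → Bool => a ≤ ((pSum n' ω n' : ℤ) : ℝ))).card := by
    rw [← Finset.card_biUnion hdisj]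
    apply Finset.card_le_card
    intro ω hω
    rw [Finset.mem_biUnion] at hω
    obtain ⟨z, hz, hωz⟩ := hω
    exact hsub z hz hωz
  have hchern := chernoff n' hn'1 a ha0
  have hsum : ∑ z ∈ Finset.Icc (M + 1) n', endAtProb m z ≤
      Real.exp (-(a ^ 2) / (2 * n')) := by
    have h2 : (0:ℝ) < 2 ^ n' := by positivity
    calc ∑ z ∈ Finset.Icc (M + 1) n', endAtProb m z =
        (∑ z ∈ Finset.Icc (M + 1) n',
          ((Finset.univ.filter
            (fun ω : Fin n' → Bool => pSum n' ω n' = (z : ℤ))).card : ℝ)) / 2 ^ n' := by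
          rw [Finset.sum_div]
          apply Finset.sum_congr rfl
          intro z _
          rw [endAtProb, ← hn'def]
      _ ≤ ((Finset.univ.filter
            (fun ω : Fin n' → Bool => a ≤ ((pSum n' ω n' : ℤ) : ℝ))).card : ℝ) / 2 ^ n' := by
          apply div_le_div_of_nonneg_right _ h2.le
          exact_mod_cast Nat.cast_le.mpr hcards
      _ ≤ 2 ^ n' * Real.exp (-(a ^ 2) / (2 * n')) / 2 ^ n' := by
          apply div_le_div_of_nonneg_right hchern h2.le
      _ = Real.exp (-(a ^ 2) / (2 * n')) := by field_simp
  have hexp_eq : Real.exp (-(a ^ 2) / (2 * n')) = Real.exp (-Real.sqrt x / 2) := by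
    congr 1
    rw [hn'x, hadef]
    have h1 : (x ^ ((3:ℝ)/4)) ^ 2 = x ^ ((3:ℝ)/2) := by
      rw [← Real.rpow_natCast (x ^ ((3:ℝ)/4)) 2, ← Real.rpow_mul hx0.le]
      norm_num
    have h2 : x ^ ((3:ℝ)/2) = Real.sqrt x * x := by
      rw [show (3:ℝ)/2 = 1/2 + 1 by norm_num, Real.rpow_add hx0, Real.rpow_one,
        ← Real.sqrt_eq_rpow]
    rw [h1, h2]
    field_simp
  rw [hxdef] at hexp_eq
  rw [show Finset.Icc (⌊((m : ℝ) - 1) ^ ((3 : ℝ) / 4)⌋₊ + 1) (m - 1) =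
      Finset.Icc (M + 1) n' by rw [hMdef, hn'def, hadef, hxdef]]
  rw [← hexp_eq]
  exact hsum

lemma min_double (a : ℝ) (ha : 0 ≤ a) : min (2 * a) 1 ≤ 2 * min a 1 := by
  rcases le_total (2 * a) 1 with h | h
  · rw [min_eq_left h]
    have : min a 1 = a := min_eq_left (by linarith)
    rw [this]
  · rw [min_eq_right h]
    rcases le_total a 1 with h2 | h2
    · rw [min_eq_left h2]; linarith
    · rw [min_eq_right h2]; norm_num

lemma exp_neg_sqrt_le (x : ℝ) (hx : 1 ≤ x) :
    Real.exp (-Real.sqrt x / 2) ≤ 12 ^ 6 / x ^ 3 := by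
  have hx0 : (0:ℝ) < x := by linarith
  have hs0 : 0 ≤ Real.sqrt x := Real.sqrt_nonneg x
  have h1 : Real.exp (Real.sqrt x / 2) = (Real.exp (Real.sqrt x / 12)) ^ 6 := by
    rw [← Real.exp_nat_mul]
    congr 1
    push_cast
    ring
  have h2 : Real.sqrt x / 12 ≤ Real.exp (Real.sqrt x / 12) := by
    have := Real.add_one_le_exp (Real.sqrt x / 12)
    linarith
  have h3 : (Real.sqrt x / 12) ^ 6 ≤ Real.exp (Real.sqrt x / 2) := by
    rw [h1]
    exact pow_le_pow_left₀ (by positivity) h2 6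
  have h4 : (Real.sqrt x / 12) ^ 6 = x ^ 3 / 12 ^ 6 := by
    rw [div_pow]
    congr 1
    rw [show 6 = 2 * 3 by norm_num, pow_mul, Real.sq_sqrt hx0.le]
  have h5 : x ^ 3 / 12 ^ 6 ≤ Real.exp (Real.sqrt x / 2) := h4 ▸ h3
  have hepos : (0:ℝ) < Real.exp (Real.sqrt x / 2) := Real.exp_pos _
  rw [neg_div, Real.exp_neg]
  rw [inv_le_iff_one_le_mul₀ hepos, ← div_le_iff₀' (by positivity : (0:ℝ) < 12 ^ 6 / x ^ 3)]
  calc (1:ℝ) / (12 ^ 6 / x ^ 3) = x ^ 3 / 12 ^ 6 := by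
        rw [one_div_div]
    _ ≤ Real.exp (Real.sqrt x / 2) := h5

lemma two_rpow_three_half_le : (2:ℝ) ^ ((3:ℝ)/2) ≤ 3 := by
  have h0 : (0:ℝ) ≤ (2:ℝ) ^ ((3:ℝ)/2) := by positivity
  have hsq : ((2:ℝ) ^ ((3:ℝ)/2)) ^ 2 = 8 := by
    rw [← Real.rpow_natCast ((2:ℝ) ^ ((3:ℝ)/2)) 2, ← Real.rpow_mul (by norm_num)]
    norm_num
  calc (2:ℝ) ^ ((3:ℝ)/2) = Real.sqrt (((2:ℝ) ^ ((3:ℝ)/2)) ^ 2) := (Real.sqrt_sq h0).symm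
    _ = Real.sqrt 8 := by rw [hsq]
    _ ≤ Real.sqrt 9 := Real.sqrt_le_sqrt (by norm_num)
    _ = 3 := by rw [show (9:ℝ) = 3 ^ 2 by norm_num, Real.sqrt_sq (by norm_num)]

lemma key_compare (m n : ℕ) (hm : 2 ≤ m) (hmn : m ≤ n) :
    (n:ℝ) ^ ((3:ℝ)/2) ≤ 3 * (m:ℝ) ^ 2 * ((n:ℝ) - m + 1) ^ ((3:ℝ)/2) := by
  have hm2 : (2:ℝ) ≤ m := by exact_mod_cast hm
  have hmn' : (m:ℝ) ≤ n := by exact_mod_cast hmn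
  set Nr : ℝ := (n:ℝ) - m + 1 with hNr
  have hNr1 : (1:ℝ) ≤ Nr := by rw [hNr]; linarith
  have hn0 : (0:ℝ) ≤ n := by positivity
  have hNrpow1 : (1:ℝ) ≤ Nr ^ ((3:ℝ)/2) := Real.one_le_rpow hNr1 (by norm_num)
  rcases le_total (m:ℝ) Nr with h | h
  · have hn2 : (n:ℝ) ≤ 2 * Nr := by rw [hNr] at h ⊢; linarith
    calc (n:ℝ) ^ ((3:ℝ)/2) ≤ (2 * Nr) ^ ((3:ℝ)/2) :=
          Real.rpow_le_rpow hn0 hn2 (by norm_num)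
      _ = (2:ℝ) ^ ((3:ℝ)/2) * Nr ^ ((3:ℝ)/2) := Real.mul_rpow (by norm_num) (by linarith)
      _ ≤ 3 * Nr ^ ((3:ℝ)/2) :=
          mul_le_mul_of_nonneg_right two_rpow_three_half_le (by positivity)
      _ ≤ 3 * (m:ℝ) ^ 2 * Nr ^ ((3:ℝ)/2) := by
          nlinarith [mul_le_mul_of_nonneg_right (by nlinarith : (3:ℝ) ≤ 3 * (m:ℝ) ^ 2)
            (by positivity : (0:ℝ) ≤ Nr ^ ((3:ℝ)/2))]
  · have hn2 : (n:ℝ) ≤ 2 * m := by rw [hNr] at h hNr1; linarith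
    have hm32 : (m:ℝ) ^ ((3:ℝ)/2) ≤ (m:ℝ) ^ 2 := by
      calc (m:ℝ) ^ ((3:ℝ)/2) ≤ (m:ℝ) ^ ((2:ℕ):ℝ) :=
            Real.rpow_le_rpow_of_exponent_le (by linarith) (by norm_num)
        _ = (m:ℝ) ^ 2 := Real.rpow_natCast _ 2
    calc (n:ℝ) ^ ((3:ℝ)/2) ≤ (2 * m) ^ ((3:ℝ)/2) :=
          Real.rpow_le_rpow hn0 hn2 (by norm_num)
      _ = (2:ℝ) ^ ((3:ℝ)/2) * (m:ℝ) ^ ((3:ℝ)/2) := Real.mul_rpow (by norm_num) (by linarith)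
      _ ≤ 3 * (m:ℝ) ^ 2 := by
          nlinarith [mul_le_mul_of_nonneg_right two_rpow_three_half_le
              (Real.rpow_nonneg (by linarith : (0:ℝ) ≤ (m:ℝ)) ((3:ℝ)/2)),
            mul_le_mul_of_nonneg_left hm32 (by norm_num : (0:ℝ) ≤ 3)]
      _ ≤ 3 * (m:ℝ) ^ 2 * Nr ^ ((3:ℝ)/2) := by
          nlinarith [mul_le_mul_of_nonneg_left hNrpow1 (by positivity : (0:ℝ) ≤ 3 * (m:ℝ) ^ 2)]

/-- With `N = n-m+1` and `M = ⌊(m-1)^{3/4}⌋`, the tail sum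
`∑_{z=M+1}^{m-1} P_0(Z_{m-1}=z) P_z(min_{i≤N} Z_i > 0)` is at most
`C (m/√N ∧ 1) exp(-(m-1)^{1/2}/2)`, and at most `C' (n-m+1)/n^{3/2}`,
for universal constants `C, C'`. -/
theorem influence_tail_sum_bound :
    ∃ C C' : ℝ, 0 < C ∧ 0 < C' ∧ ∀ n m : ℕ, 2 ≤ m → m ≤ n →
      (∑ z ∈ Finset.Icc (⌊((m : ℝ) - 1) ^ ((3 : ℝ) / 4)⌋₊ + 1) (m - 1),
          endAtProb m z * stayPosProb (n - m + 1) z) ≤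
        C * min ((m : ℝ) / Real.sqrt ((n : ℝ) - m + 1)) 1 *
          Real.exp (-Real.sqrt ((m : ℝ) - 1) / 2) ∧
      (∑ z ∈ Finset.Icc (⌊((m : ℝ) - 1) ^ ((3 : ℝ) / 4)⌋₊ + 1) (m - 1),
          endAtProb m z * stayPosProb (n - m + 1) z) ≤
        C' * ((n : ℝ) - m + 1) / (n : ℝ) ^ ((3 : ℝ) / 2) := by
  refine ⟨2, 48 * 12 ^ 6, by norm_num, by norm_num, ?_⟩
  intro n m hm hmn
  set M := ⌊((m : ℝ) - 1) ^ ((3 : ℝ) / 4)⌋₊ with hM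
  set N := n - m + 1 with hNdef
  have hN1 : 1 ≤ N := by omega
  have hNcast : (N : ℝ) = (n : ℝ) - m + 1 := by
    rw [hNdef]
    push_cast [Nat.cast_sub hmn]
    ring
  set Nr : ℝ := (n : ℝ) - m + 1 with hNrdef
  have hNr1 : (1:ℝ) ≤ Nr := by
    have : (m:ℝ) ≤ n := by exact_mod_cast hmn
    rw [hNrdef]; linarith
  have hNr0 : (0:ℝ) < Nr := by linarith
  have hsqrtNr : (0:ℝ) < Real.sqrt Nr := Real.sqrt_pos.2 hNr0
  set x : ℝ := (m : ℝ) - 1 with hxdef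
  have hm2 : (2:ℝ) ≤ m := by exact_mod_cast hm
  have hx1 : (1:ℝ) ≤ x := by rw [hxdef]; linarith
  have hx0 : (0:ℝ) < x := by linarith
  set B : ℝ := min ((m : ℝ) / Real.sqrt Nr) 1 with hB
  have hB0 : (0:ℝ) ≤ B := le_min (by positivity) (by norm_num)
  have hstay : ∀ z ∈ Finset.Icc (M + 1) (m - 1), stayPosProb N z ≤ 2 * B := by
    intro z hz
    rw [Finset.mem_Icc] at hz
    have hz1 : 1 ≤ z := by omega
    have hzm : (z:ℝ) ≤ (m:ℝ) := by
      have : z ≤ m := by omega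
      exact_mod_cast this
    have h1 : stayPosProb N z ≤ min (2 * ((m:ℝ) / Real.sqrt Nr)) 1 := by
      refine le_min ?_ (stayPosProb_le_one N z)
      calc stayPosProb N z ≤ 2 * z / Real.sqrt N := stayPosProb_le N z hN1 hz1
        _ ≤ 2 * ((m:ℝ) / Real.sqrt Nr) := by
            rw [hNcast, mul_div_assoc]
            apply mul_le_mul_of_nonneg_left _ (by norm_num)
            exact div_le_div_of_nonneg_right hzm hsqrtNr.le
    exact h1.trans (min_double _ (by positivity))
  have hsumA : ∑ z ∈ Finset.Icc (M + 1) (m - 1), endAtProb m z * stayPosProb N z ≤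
      2 * B * Real.exp (-Real.sqrt x / 2) := by
    calc ∑ z ∈ Finset.Icc (M + 1) (m - 1), endAtProb m z * stayPosProb N z ≤
        ∑ z ∈ Finset.Icc (M + 1) (m - 1), endAtProb m z * (2 * B) := by
          apply Finset.sum_le_sum
          intro z hz
          exact mul_le_mul_of_nonneg_left (hstay z hz) (endAtProb_nonneg m z)
      _ = 2 * B * ∑ z ∈ Finset.Icc (M + 1) (m - 1), endAtProb m z := by
          rw [← Finset.sum_mul]; ring
      _ ≤ 2 * B * Real.exp (-Real.sqrt x / 2) := by
          apply mul_le_mul_of_nonneg_left _ (by linarith)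
          rw [hM, hxdef]
          exact sum_endAtProb_le m hm
  refine ⟨hsumA, ?_⟩
  have hnpos : (0:ℝ) < n := by
    have : (m:ℝ) ≤ n := by exact_mod_cast hmn
    linarith
  have hnrpow : (0:ℝ) < (n:ℝ) ^ ((3:ℝ)/2) := Real.rpow_pos_of_pos hnpos _
  have hNr32 : Nr ^ ((3:ℝ)/2) = Nr * Real.sqrt Nr := by
    rw [show (3:ℝ)/2 = 1 + 1/2 by norm_num, Real.rpow_add hNr0, Real.rpow_one,
      ← Real.sqrt_eq_rpow]
  have hxm : (m:ℝ) ≤ 2 * x := by rw [hxdef]; linarith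
  calc ∑ z ∈ Finset.Icc (M + 1) (m - 1), endAtProb m z * stayPosProb N z ≤
      2 * B * Real.exp (-Real.sqrt x / 2) := hsumA
    _ ≤ 2 * ((m:ℝ) / Real.sqrt Nr) * (12 ^ 6 / x ^ 3) := by
        apply mul_le_mul
        · exact mul_le_mul_of_nonneg_left (min_le_left _ _) (by norm_num)
        · exact exp_neg_sqrt_le x hx1
        · exact (Real.exp_pos _).le
        · positivity
    _ = 2 * (m:ℝ) * 12 ^ 6 / (Real.sqrt Nr * x ^ 3) := by
        field_simp
    _ ≤ 48 * 12 ^ 6 * Nr / (n:ℝ) ^ ((3:ℝ)/2) := by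
        rw [div_le_div_iff₀ (by positivity) hnrpow]
        have hkey := key_compare m n hm hmn
        rw [← hNrdef] at hkey
        calc 2 * (m:ℝ) * 12 ^ 6 * (n:ℝ) ^ ((3:ℝ)/2) ≤
            2 * (m:ℝ) * 12 ^ 6 * (3 * (m:ℝ) ^ 2 * Nr ^ ((3:ℝ)/2)) := by
              apply mul_le_mul_of_nonneg_left hkey (by positivity)
          _ = 6 * 12 ^ 6 * (m:ℝ) ^ 3 * (Nr * Real.sqrt Nr) := by rw [hNr32]; ring
          _ ≤ 6 * 12 ^ 6 * (8 * x ^ 3) * (Nr * Real.sqrt Nr) := by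
              apply mul_le_mul_of_nonneg_right _
                (mul_nonneg hNr0.le (Real.sqrt_nonneg _))
              apply mul_le_mul_of_nonneg_left _ (by norm_num)
              calc (m:ℝ) ^ 3 ≤ (2 * x) ^ 3 := pow_le_pow_left₀ (by positivity) hxm 3
                _ = 8 * x ^ 3 := by ring
          _ = 48 * 12 ^ 6 * Nr * (Real.sqrt Nr * x ^ 3) := by ring
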